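/- Let E be a model category, K a saturated class of morphisms of E, and suppose the class W of weak equivalences is K-perfect. Then W ∩ K is closed under transfinite composition: for every well-ordered type λ and every functor X : λ → E which is smooth (X_β is the colimit of X restricted to {α : α < β} for every limit element β) and whose successor morphisms X_α → X_{α+1} all belong to W ∩ K, the transfinite composite X_0 → colim_λ X belongs to W ∩ K; in particular it is a weak equivalence. -/

import Mathlib

open CategoryTheory CategoryTheory.Limits

universe v u

/-- A model structure on a category: classes of weak equivalences, cofibrations and
fibrations, satisfying the model category axioms (two-out-of-three, closure of the
three classes under retracts, lifting, and factorization). -/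
structure ModelStruct (C : Type u) [Category.{v} C] : Type (max u v) where
  /-- weak equivalences -/
  W : MorphismProperty C
  /-- cofibrations -/
  Cof : MorphismProperty C
  /-- fibrations -/
  Fib : MorphismProperty C
  W_of_isIso : ∀ {X Y : C} (f : X ⟶ Y), IsIso f → W f
  W_comp : ∀ {X Y Z : C} (f : X ⟶ Y) (g : Y ⟶ Z), W f → W g → W (f ≫ g)
  W_of_comp_left : ∀ {X Y Z : C} (f : X ⟶ Y) (g : Y ⟶ Z), W f → W (f ≫ g) → W g
  W_of_comp_right : ∀ {X Y Z : C} (f : X ⟶ Y) (g : Y ⟶ Z), W g → W (f ≫ g) → W f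
  W_retract : ∀ {X Y X' Y' : C} (f : X ⟶ Y) (f' : X' ⟶ Y') (i : X ⟶ X') (r : X' ⟶ X)
      (j : Y ⟶ Y') (s : Y' ⟶ Y), i ≫ r = 𝟙 X → j ≫ s = 𝟙 Y →
      i ≫ f' = f ≫ j → r ≫ f = f' ≫ s → W f' → W f
  Cof_retract : ∀ {X Y X' Y' : C} (f : X ⟶ Y) (f' : X' ⟶ Y') (i : X ⟶ X') (r : X' ⟶ X)
      (j : Y ⟶ Y') (s : Y' ⟶ Y), i ≫ r = 𝟙 X → j ≫ s = 𝟙 Y →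
      i ≫ f' = f ≫ j → r ≫ f = f' ≫ s → Cof f' → Cof f
  Fib_retract : ∀ {X Y X' Y' : C} (f : X ⟶ Y) (f' : X' ⟶ Y') (i : X ⟶ X') (r : X' ⟶ X)
      (j : Y ⟶ Y') (s : Y' ⟶ Y), i ≫ r = 𝟙 X → j ≫ s = 𝟙 Y →
      i ≫ f' = f ≫ j → r ≫ f = f' ≫ s → Fib f' → Fib f
  lift : ∀ {A B X Y : C} (i : A ⟶ B) (p : X ⟶ Y), Cof i → Fib p → (W i ∨ W p) →
      ∀ (u : A ⟶ X) (v : B ⟶ Y), u ≫ p = i ≫ v → ∃ l : B ⟶ X, i ≫ l = u ∧ l ≫ p = v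
  factorization_cof_trivFib : ∀ {X Y : C} (f : X ⟶ Y), ∃ (Z : C) (i : X ⟶ Z) (p : Z ⟶ Y),
      Cof i ∧ Fib p ∧ W p ∧ i ≫ p = f
  factorization_trivCof_fib : ∀ {X Y : C} (f : X ⟶ Y), ∃ (Z : C) (i : X ⟶ Z) (p : Z ⟶ Y),
      Cof i ∧ W i ∧ Fib p ∧ i ≫ p = f

variable {C : Type u} [Category.{v} C]

/-- A morphism `f : X ⟶ Y` is an h-cofibration if cobase change along `f` preserves
weak equivalences: for every `g : X ⟶ A`, every weak equivalence `w : A ⟶ B`, and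
pushouts `P = Y ⊔_X A` (of `g` along `f`) and `Q = Y ⊔_X B` (of `g ≫ w` along `f`),
the induced map `w' : P ⟶ Q` is a weak equivalence. -/
def HCof (M : ModelStruct C) {X Y : C} (f : X ⟶ Y) : Prop :=
  ∀ ⦃A B P Q : C⦄ (g : X ⟶ A) (w : A ⟶ B)
    (a : A ⟶ P) (y : Y ⟶ P) (b : B ⟶ Q) (y' : Y ⟶ Q) (w' : P ⟶ Q),
    M.W w → IsPushout g f a y → IsPushout (g ≫ w) f b y' →
    a ≫ w' = w ≫ b → y ≫ w' = y' → M.W w'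

/-- A model category is left proper if the pushout of a weak equivalence along a
cofibration is again a weak equivalence. -/
def LeftProper (M : ModelStruct C) : Prop :=
  ∀ ⦃X Y Z P : C⦄ (i : X ⟶ Y) (w : X ⟶ Z) (h : Z ⟶ P) (k : Y ⟶ P),
    M.Cof i → M.W w → IsPushout w i h k → M.W k

/-- The inclusion of the subset `{α | α < β}` of a preorder, as a functor. -/
def iioFunctor {Λ : Type v} [Preorder Λ] (β : Λ) : Set.Iio β ⥤ Λ :=
  Monotone.functor (f := fun x : Set.Iio β => (x : Λ)) (fun _ _ h => h)

/-- The cocone on the restriction of `X : Λ ⥤ C` to `{α | α < β}` with apex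
`X.obj β`; `X` is smooth at a limit element `β` when this cocone is a colimit
cocone. -/
def iioCocone {Λ : Type v} [Preorder Λ] (β : Λ) (X : Λ ⥤ C) :
    Cocone (iioFunctor β ⋙ X) where
  pt := X.obj β
  ι :=
    { app := fun α => X.map (homOfLE α.2.le)
      naturality := by
        intro a b f
        dsimp [iioFunctor]
        rw [Category.comp_id, ← X.map_comp]
        exact congrArg X.map (Subsingleton.elim _ _) }

/-- A class `K` of morphisms is closed under transfinite composition: for every
well-ordered type `Λ` (with bottom element) and every smooth functor `X : Λ ⥤ C`
(the value at every limit element is the colimit of the restriction to the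
preceding elements) whose successor morphisms all lie in `K`, the transfinite
composite `X.obj ⊥ ⟶ colimit X` lies in `K`. -/
def ClosedUnderTransfiniteComposition (K : MorphismProperty C) : Prop :=
  ∀ (Λ : Type v) [LinearOrder Λ] [OrderBot Λ] [SuccOrder Λ] [WellFoundedLT Λ]
    (X : Λ ⥤ C) [HasColimit X],
    (∀ β : Λ, Order.IsSuccLimit β → Nonempty (IsColimit (iioCocone β X))) →
    (∀ α : Λ, ¬IsMax α → K (X.map (homOfLE (Order.le_succ α)))) →
    K (colimit.ι X ⊥)

/-- A class `K` of morphisms is saturated if it is closed under cobase change,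
retracts, and transfinite composition. -/
structure IsSaturated (K : MorphismProperty C) : Prop where
  cobase : ∀ {X Y A P : C} (f : X ⟶ Y) (g : X ⟶ A) (inl : Y ⟶ P) (inr : A ⟶ P),
    IsPushout f g inl inr → K f → K inr
  retract : ∀ {X Y X' Y' : C} (f : X ⟶ Y) (f' : X' ⟶ Y') (i : X ⟶ X') (r : X' ⟶ X)
    (j : Y ⟶ Y') (s : Y' ⟶ Y), i ≫ r = 𝟙 X → j ≫ s = 𝟙 Y →
    i ≫ f' = f ≫ j → r ≫ f = f' ≫ s → K f' → K f
  transfinite : ClosedUnderTransfiniteComposition K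

/-- The class `W` of weak equivalences is `K`-perfect if it is closed under
filtered colimits along morphisms of `K`: for every filtered category `J` and
every natural transformation `η : F ⟶ G` of functors `J ⥤ C` whose components are
weak equivalences and whose transition morphisms (of `F` and of `G`) lie in `K`,
the induced morphism `colimit F ⟶ colimit G` is a weak equivalence. -/
def KPerfect (W K : MorphismProperty C) : Prop :=
  ∀ (J : Type v) [Category.{v} J] [IsFiltered J] (F G : J ⥤ C) (η : F ⟶ G)
    [HasColimit F] [HasColimit G],
    (∀ j : J, W (η.app j)) →
    (∀ {i j : J} (f : i ⟶ j), K (F.map f)) →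
    (∀ {i j : J} (f : i ⟶ j), K (G.map f)) →
    W (colimMap η)


namespace Statement14Aux

/-- The trivial cocone on a constant functor. -/
def constCocone (J : Type v) [Category.{v} J] (A : C) :
    Cocone ((Functor.const J).obj A) where
  pt := A
  ι := { app := fun _ => 𝟙 A
         naturality := by intros; simp }

/-- Over a filtered category, the trivial cocone on a constant functor is a colimit. -/
noncomputable def constCoconeIsColimit (J : Type v) [Category.{v} J] [IsFiltered J] (A : C) :
    IsColimit (constCocone J A) := by
  apply IsColimit.ofExistsUnique
  intro s
  obtain ⟨j₀⟩ := (IsFiltered.nonempty : Nonempty J)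
  have key : ∀ j : J, s.ι.app j = s.ι.app j₀ := by
    intro j
    have h1 := s.w (IsFiltered.leftToMax j j₀)
    have h2 := s.w (IsFiltered.rightToMax j j₀)
    simp only [Functor.const_obj_map, Category.id_comp] at h1 h2
    rw [← h1, ← h2]
  refine ⟨s.ι.app j₀, fun j => ?_, fun m hm => ?_⟩
  · show 𝟙 A ≫ _ = _
    rw [Category.id_comp, key j]
  · have h := hm j₀
    dsimp [constCocone] at h
    exact (Category.id_comp m).symm.trans h

/-- Successor structure on a closed interval. -/
def iccSuccOrder {Λ : Type v} [LinearOrder Λ] [SuccOrder Λ] (α β : Λ) :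
    SuccOrder (Set.Icc α β) where
  succ x := ⟨min (Order.succ (x : Λ)) β,
    le_min (x.2.1.trans (Order.le_succ _)) (x.2.1.trans x.2.2), min_le_right _ _⟩
  le_succ x := show (x : Λ) ≤ min (Order.succ (x : Λ)) β from le_min (Order.le_succ _) x.2.2
  max_of_succ_le := by
    intro x hx
    rcases min_le_iff.mp hx with h | h
    · intro y hy
      exact (Order.max_of_succ_le h) hy
    · intro y hy
      exact (y.2.2.trans h : (y : Λ) ≤ x)
  succ_le_of_lt := by
    intro x y hxy
    show min (Order.succ (x : Λ)) β ≤ (y : Λ)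
    exact le_trans (min_le_left _ _) (Order.succ_le_of_lt hxy)

def iccOrderBot {Λ : Type v} [Preorder Λ] (α β : Λ) (hαβ : α ≤ β) :
    OrderBot (Set.Icc α β) where
  bot := ⟨α, le_refl α, hαβ⟩
  bot_le x := x.2.1

def iccFunctor {Λ : Type v} [Preorder Λ] (α β : Λ) : Set.Icc α β ⥤ Λ :=
  Monotone.functor (f := fun x : Set.Icc α β => (x : Λ)) (fun _ _ h => h)

lemma icc_isSuccLimit {Λ : Type v} [LinearOrder Λ] {α β : Λ} {δ : Set.Icc α β}
    (h : Order.IsSuccLimit δ) : Order.IsSuccLimit (δ : Λ) := by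
  obtain ⟨y, hy⟩ := not_isMin_iff.mp h.1
  have hyδ : (y : Λ) < δ := hy
  have hαδ : α < (δ : Λ) := lt_of_le_of_lt y.2.1 hyδ
  constructor
  · exact not_isMin_iff.mpr ⟨α, hαδ⟩
  · intro γ hγ
    have hαγ : α ≤ γ := by
      by_contra hn
      exact hγ.2 (lt_of_not_ge hn) hαδ
    have hγβ : γ ≤ β := (hγ.1.le.trans δ.2.2)
    exact h.2 ⟨γ, hαγ, hγβ⟩ ⟨hγ.1, fun c hc1 hc2 => hγ.2 hc1 hc2⟩

/-- Extension of colimit cocones from an ambient `Iio δ` to the interval `[α, δ)`. -/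
noncomputable def iccIioIsColimit {Λ : Type v} [LinearOrder Λ] (X : Λ ⥤ C) (α β δ : Λ)
    (hαδ : α < δ) (hδβ : δ ≤ β) (_hαβ : α ≤ β)
    (hc : IsColimit (iioCocone δ X)) :
    IsColimit (iioCocone (⟨δ, hαδ.le, hδβ⟩ : Set.Icc α β) (iccFunctor α β ⋙ X)) := by
  set δ' : Set.Icc α β := ⟨δ, hαδ.le, hδβ⟩ with hδ'
  apply IsColimit.ofExistsUnique
  intro s
  have mapw : ∀ (a b : Set.Iio δ') (hab : ((a : Set.Icc α β) : Λ) ≤ ((b : Set.Icc α β) : Λ)),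
      X.map (homOfLE hab) ≫ s.ι.app b = s.ι.app a := by
    intro a b hab
    exact s.w (homOfLE (show (a : Set.Icc α β) ≤ b from hab))
  let jmap : Set.Iio δ → Set.Iio δ' := fun γ =>
    ⟨⟨max α (γ : Λ), le_max_left _ _, (max_lt hαδ γ.2).le.trans hδβ⟩,
      show max α (γ : Λ) < δ from max_lt hαδ γ.2⟩
  let ext : Cocone (iioFunctor δ ⋙ X) :=
    { pt := s.pt
      ι :=
        { app := fun γ => X.map (homOfLE (le_max_right α (γ : Λ))) ≫ s.ι.app (jmap γ)
          naturality := by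
            intro γ₁ γ₂ f
            dsimp
            rw [Category.comp_id]
            have h12 : ((jmap γ₁ : Set.Icc α β) : Λ) ≤ ((jmap γ₂ : Set.Icc α β) : Λ) :=
              max_le_max le_rfl (leOfHom f)
            rw [← mapw _ _ h12]
            refine (Category.assoc _ _ _).symm.trans (Eq.trans ?_ (Category.assoc _ _ _))
            exact congrArg (· ≫ s.ι.app (jmap γ₂)) ((X.map_comp _ _).symm.trans
              ((congrArg X.map (Subsingleton.elim _ _)).trans (X.map_comp _ _))) } }
  refine ⟨hc.desc ext, fun j => ?_, fun m hm => ?_⟩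
  · have h1 := hc.fac ext ⟨((j : Set.Icc α β) : Λ), j.2⟩
    have h2 := mapw j (jmap ⟨((j : Set.Icc α β) : Λ), j.2⟩)
      (le_max_right α ((j : Set.Icc α β) : Λ))
    exact h1.trans h2
  · refine hc.uniq ext m fun γ => ?_
    have hsplit : X.map (homOfLE γ.2.le) =
        X.map (homOfLE (le_max_right α (γ : Λ))) ≫
          X.map (homOfLE (show max α (γ : Λ) ≤ δ from (max_lt hαδ γ.2).le)) := by
      rw [← X.map_comp]
      exact congrArg X.map (Subsingleton.elim _ _)
    show X.map (homOfLE γ.2.le) ≫ m = _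
    rw [hsplit]
    refine (Category.assoc _ _ _).trans ?_
    exact congrArg (CategoryStruct.comp (X.map (homOfLE (le_max_right α (γ : Λ))))) (hm (jmap γ))

instance : SuccOrder PUnit.{v+1} where
  succ _ := PUnit.unit
  le_succ _ := le_of_eq (Subsingleton.elim _ _)
  max_of_succ_le := by
    intro a _ b _
    exact le_of_eq (Subsingleton.elim _ _)
  succ_le_of_lt := by
    intro a b h
    cases a; cases b
    exact absurd h (lt_irrefl _)

end Statement14Aux

set_option maxHeartbeats 1600000 in
set_option synthInstance.maxHeartbeats 400000 in
/-- If the class of weak equivalences of a model category is `K`-perfect for a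
saturated class `K`, then `W ∩ K` is closed under transfinite composition. -/
theorem statement_14 [HasColimitsOfSize.{v, v} C]
    (M : ModelStruct C) (K : MorphismProperty C)
    (hK : IsSaturated K) (hperf : KPerfect M.W K) :
    ClosedUnderTransfiniteComposition
      (fun {_ _ : C} f => M.W f ∧ K f) := by
  intro Λ _ _ _ _ X _ hsmooth hsucc
  classical
  -- identities belong to K
  have idK : ∀ A : C, K (𝟙 A) := by
    intro A
    haveI : WellFoundedLT PUnit.{v+1} :=
      ⟨⟨fun a => Acc.intro a fun b h => absurd h (by cases a; cases b; exact lt_irrefl _)⟩⟩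
    haveI : HasColimitsOfShape PUnit.{v+1} C := HasColimitsOfSize.has_colimits_of_shape _
    set F := (Functor.const PUnit.{v+1}).obj A with hF
    have hcol : K (colimit.ι F ⊥) :=
      hK.transfinite PUnit.{v+1} F
        (fun β hβ => absurd (Subsingleton.elim β ⊥) hβ.ne_bot)
        (fun a ha => absurd (fun b _ => le_of_eq (Subsingleton.elim _ _)) ha)
    have tPU : IsTerminal (⊥ : PUnit.{v+1}) :=
      IsTerminal.ofUniqueHom (fun x => homOfLE (le_of_eq (Subsingleton.elim _ _)))
        (fun _ _ => Subsingleton.elim _ _)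
    let iso := colimit.isoColimitCocone
      ⟨coconeOfDiagramTerminal tPU F, colimitOfDiagramTerminal tPU F⟩
    have h1 : colimit.ι F ⊥ ≫ iso.hom = 𝟙 A := by
      rw [colimit.isoColimitCocone_ι_hom]
      show F.map (tPU.from ⊥) = 𝟙 A
      rfl
    exact hK.retract (𝟙 A) (colimit.ι F ⊥) (𝟙 A) (𝟙 A) (colimit.ι F ⊥) iso.hom
      (Category.id_comp _) h1 (by simp) (by simp [h1]) hcol
  -- K is stable under composing with an isomorphism on the right
  have Kpost : ∀ {A B B' : C} (f : A ⟶ B) (e : B ≅ B'), K f → K (f ≫ e.hom) := by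
    intro A B B' f e hf
    exact hK.retract (f ≫ e.hom) f (𝟙 A) (𝟙 A) e.inv e.hom (Category.id_comp _)
      e.inv_hom_id (by simp) (by simp) hf
  have mapCongr : ∀ {a b b' : Λ} (_ : b = b') (h : a ≤ b) (h' : a ≤ b'),
      K (X.map (homOfLE h')) → K (X.map (homOfLE h)) := by
    intro a b b' hb h h' hk
    subst hb; exact hk
  -- every transition morphism of `X` belongs to `K`
  have Qk : ∀ β α : Λ, ∀ h : α ≤ β, K (X.map (homOfLE h)) := by
    intro β
    induction β using WellFoundedLT.induction with
    | _ β IH =>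
      intro α h
      rcases eq_or_lt_of_le h with rfl | hlt
      · have hid : X.map (homOfLE h) = 𝟙 (X.obj α) := X.map_id α
        rw [hid]; exact idK _
      · haveI : HasColimitsOfShape (Set.Icc α β) C := HasColimitsOfSize.has_colimits_of_shape _
        letI : OrderBot (Set.Icc α β) := Statement14Aux.iccOrderBot α β h
        letI : SuccOrder (Set.Icc α β) := Statement14Aux.iccSuccOrder α β
        set X' := Statement14Aux.iccFunctor α β ⋙ X with hX'
        have hKtc : K (colimit.ι X' ⊥) := by
          refine hK.transfinite (Set.Icc α β) X' ?_ ?_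
          · intro δ' hδ'
            have hδL := Statement14Aux.icc_isSuccLimit hδ'
            have h1 : α < (δ' : Λ) := by
              obtain ⟨y, hy⟩ := not_isMin_iff.mp hδ'.1
              exact lt_of_le_of_lt y.2.1 hy
            obtain ⟨hc⟩ := hsmooth (δ' : Λ) hδL
            exact ⟨Statement14Aux.iccIioIsColimit X α β (δ' : Λ) h1 δ'.2.2 h hc⟩
          · intro x hx
            obtain ⟨y, hy⟩ := not_isMax_iff.mp hx
            have hxβ : (x : Λ) < β := lt_of_lt_of_le hy y.2.2
            have hs : Order.succ (x : Λ) ≤ β := Order.succ_le_of_lt hxβ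
            have hxm : ¬IsMax (x : Λ) := fun hm => absurd (hm (le_of_lt hxβ)) (not_le_of_gt hxβ)
            have hk := (hsucc (x : Λ) hxm).2
            show K (X.map (homOfLE (show (x : Λ) ≤ min (Order.succ (x : Λ)) β from
              le_min (Order.le_succ _) x.2.2)))
            exact mapCongr (min_eq_left hs) _ (Order.le_succ (x : Λ)) hk
        have tTop : IsTerminal ((⟨β, h, le_rfl⟩ : Set.Icc α β)) :=
          IsTerminal.ofUniqueHom (fun x => homOfLE (show x ≤ ⟨β, h, le_rfl⟩ from x.2.2))
            (fun _ _ => Subsingleton.elim _ _)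
        let iso := colimit.isoColimitCocone
          ⟨coconeOfDiagramTerminal tTop X', colimitOfDiagramTerminal tTop X'⟩
        have heq : colimit.ι X' ⊥ ≫ iso.hom = X.map (homOfLE h) := by
          rw [colimit.isoColimitCocone_ι_hom]
          show X'.map (tTop.from ⊥) = X.map (homOfLE h)
          rw [show tTop.from ⊥ =
            homOfLE (show (⊥ : Set.Icc α β) ≤ ⟨β, h, le_rfl⟩ from h) from Subsingleton.elim _ _]
          rfl
        rw [← heq]
        exact Kpost _ iso hKtc
  -- the maps from the bottom object are weak equivalences
  have Qw : ∀ β : Λ, M.W (X.map (homOfLE (bot_le : (⊥ : Λ) ≤ β))) := by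
    intro β
    induction β using WellFoundedLT.induction with
    | _ β IH =>
      by_cases hβ : Order.IsSuccLimit β
      · haveI : HasColimitsOfShape (Set.Iio β) C := HasColimitsOfSize.has_colimits_of_shape _
        haveI hne : Nonempty (Set.Iio β) := ⟨⟨⊥, hβ.ne_bot.bot_lt⟩⟩
        set G := iioFunctor β ⋙ X with hG
        set F := (Functor.const (Set.Iio β)).obj (X.obj ⊥) with hF
        let η : F ⟶ G :=
          { app := fun γ => X.map (homOfLE (bot_le : (⊥ : Λ) ≤ (γ : Λ)))
            naturality := by
              intro a b f
              show 𝟙 _ ≫ _ = _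
              rw [Category.id_comp]
              show _ = X.map _ ≫ X.map _
              rw [← X.map_comp]
              exact congrArg X.map (Subsingleton.elim _ _) }
        have Wc : M.W (colimMap η) := by
          refine hperf (Set.Iio β) F G η (fun γ => IH (γ : Λ) γ.2)
            (fun {a b} f => ?_) (fun {a b} f => ?_)
          · show K (𝟙 (X.obj ⊥))
            exact idK _
          · show K (X.map (homOfLE (show (a : Λ) ≤ (b : Λ) from leOfHom f)))
            exact Qk _ _ _
        let e := (Statement14Aux.constCoconeIsColimit (Set.Iio β)
          (X.obj ⊥)).coconePointUniqueUpToIso (colimit.isColimit F)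
        obtain ⟨hsm⟩ := hsmooth β hβ
        let u := (colimit.isColimit G).coconePointUniqueUpToIso hsm
        have he : e.hom = colimit.ι F ⟨⊥, hβ.ne_bot.bot_lt⟩ := by
          have h0 := IsColimit.comp_coconePointUniqueUpToIso_hom
            (Statement14Aux.constCoconeIsColimit (Set.Iio β) (X.obj ⊥)) (colimit.isColimit F)
            ⟨⊥, hβ.ne_bot.bot_lt⟩
          dsimp [Statement14Aux.constCocone] at h0
          rwa [Category.id_comp] at h0
        have hu : colimit.ι G ⟨⊥, hβ.ne_bot.bot_lt⟩ ≫ u.hom =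
            X.map (homOfLE (bot_le : (⊥ : Λ) ≤ β)) :=
          IsColimit.comp_coconePointUniqueUpToIso_hom (colimit.isColimit G) hsm _
        have keyeq : e.hom ≫ colimMap η ≫ u.hom =
            X.map (homOfLE (bot_le : (⊥ : Λ) ≤ β)) := by
          rw [show e.hom ≫ colimMap η ≫ u.hom = colimit.ι F _ ≫ colimMap η ≫ u.hom from
            congrArg (· ≫ colimMap η ≫ u.hom) he, ← Category.assoc, ι_colimMap, Category.assoc, hu]
          show X.map _ ≫ X.map _ = _
          exact (X.map_comp _ _).symm.trans (congrArg X.map (Subsingleton.elim _ _))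
        rw [← keyeq]
        exact M.W_comp _ _ (M.W_of_isIso _ (Iso.isIso_hom e))
          (M.W_comp _ _ Wc (M.W_of_isIso _ (Iso.isIso_hom u)))
      · rcases eq_or_ne β ⊥ with rfl | hne
        · have hid : X.map (homOfLE (bot_le : (⊥ : Λ) ≤ ⊥)) = 𝟙 _ := X.map_id ⊥
          rw [hid]
          exact M.W_of_isIso _ inferInstance
        · have hpl : ¬Order.IsSuccPrelimit β :=
            fun hp => hβ ⟨fun hm => hne hm.eq_bot, hp⟩
          obtain ⟨γ, hγmax, hγ⟩ := Order.not_isSuccPrelimit_iff_succ_eq.mp hpl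
          subst hγ
          have hcomp := M.W_comp (X.map (homOfLE (bot_le : (⊥ : Λ) ≤ γ)))
            (X.map (homOfLE (Order.le_succ γ)))
            (IH γ (Order.lt_succ_of_not_isMax hγmax)) (hsucc γ hγmax).1
          rw [← X.map_comp] at hcomp
          rw [show (homOfLE (bot_le : (⊥ : Λ) ≤ γ) ≫ homOfLE (Order.le_succ γ)) =
            homOfLE (bot_le : (⊥ : Λ) ≤ Order.succ γ) from Subsingleton.elim _ _] at hcomp
          exact hcomp
  constructor
  · haveI : HasColimitsOfShape Λ C := HasColimitsOfSize.has_colimits_of_shape _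
    haveI : Nonempty Λ := ⟨⊥⟩
    set F := (Functor.const Λ).obj (X.obj ⊥) with hF
    let η : F ⟶ X :=
      { app := fun a => X.map (homOfLE (bot_le : (⊥ : Λ) ≤ a))
        naturality := by
          intro a b f
          show 𝟙 _ ≫ _ = _
          rw [Category.id_comp]
          show _ = X.map _ ≫ X.map _
          rw [← X.map_comp]
          exact congrArg X.map (Subsingleton.elim _ _) }
    have Wc : M.W (colimMap η) := by
      refine hperf Λ F X η (fun a => Qw a) (fun {a b} f => ?_) (fun {a b} f => ?_)
      · show K (𝟙 (X.obj ⊥))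
        exact idK _
      · show K (X.map (homOfLE (leOfHom f)))
        exact Qk _ _ _
    let e := (Statement14Aux.constCoconeIsColimit Λ
      (X.obj ⊥)).coconePointUniqueUpToIso (colimit.isColimit F)
    have he : e.hom = colimit.ι F ⊥ := by
      have h0 := IsColimit.comp_coconePointUniqueUpToIso_hom
        (Statement14Aux.constCoconeIsColimit Λ (X.obj ⊥)) (colimit.isColimit F) ⊥
      dsimp [Statement14Aux.constCocone] at h0
      rwa [Category.id_comp] at h0
    have keyeq : e.hom ≫ colimMap η = colimit.ι X ⊥ := by
      rw [show e.hom ≫ colimMap η = colimit.ι F ⊥ ≫ colimMap η from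
        congrArg (· ≫ colimMap η) he, ι_colimMap]
      have hid : X.map (homOfLE (bot_le : (⊥ : Λ) ≤ ⊥)) = 𝟙 _ := X.map_id ⊥
      show X.map (homOfLE (bot_le : (⊥ : Λ) ≤ ⊥)) ≫ _ = _
      rw [hid, Category.id_comp]
    rw [← keyeq]
    exact M.W_comp _ _ (M.W_of_isIso _ (Iso.isIso_hom e)) Wc
  · exact hK.transfinite Λ X hsmooth (fun a ha => (hsucc a ha).2)
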